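/- There exist sequences a, b, c : Fin 5 → ℝ with equal means (∑ a = ∑ b = ∑ c), such that c l > a l for at least 4 indices l, and b l > a l for at least 4 indices l, yet the median of a is strictly greater than the median of b. -/

import Mathlib

/-- Median of a finite sequence: middle element (for n = 5, the 3rd smallest). -/
noncomputable def median {n : ℕ} (x : Fin n → ℝ) : ℝ :=
  (Multiset.sort (Multiset.map x Finset.univ.val) (· ≤ ·)).getD (n / 2) 0

lemma sort_coe (l : List ℝ) (h : l.Pairwise (· ≤ ·)) :
    Multiset.sort (↑l : Multiset ℝ) (· ≤ ·) = l :=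
  List.Perm.eq_of_pairwise' (Multiset.pairwise_sort _ _) h
    (Quotient.exact (Multiset.sort_eq _ _))

lemma med_eval (x : Fin 5 → ℝ) (l : List ℝ) (h : l.Pairwise (· ≤ ·))
    (hp : [x 0, x 1, x 2, x 3, x 4].Perm l) :
    median x = l.getD 2 0 := by
  have hm : Multiset.map x Finset.univ.val = (↑l : Multiset ℝ) := by
    have h0 : Multiset.map x Finset.univ.val = ↑[x 0, x 1, x 2, x 3, x 4] := rfl
    rw [h0]; exact Quotient.sound hp
  simp [median, hm, sort_coe l h]

/-- Motivating example: three systems with equal means, where `c` and `b` beat `a`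
on at least 4 of 5 instances, yet the median of `a` exceeds the median of `b`. -/
theorem motivating_example :
    ∃ a b c : Fin 5 → ℝ,
      (∑ l, a l) = (∑ l, b l) ∧ (∑ l, b l) = (∑ l, c l) ∧
      (Finset.univ.filter (fun l => c l > a l)).card ≥ 4 ∧
      (Finset.univ.filter (fun l => b l > a l)).card ≥ 4 ∧
      median a > median b := by
  refine ⟨![0, 0, 10, 10, 10], ![1, 1, 11, 11, 6], ![1, 1, 11, 11, 6], ?_, rfl, ?_, ?_, ?_⟩
  · simp [Fin.sum_univ_five]; norm_num
  · have : (Finset.univ.filter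
        (fun l => (![1, 1, 11, 11, 6] : Fin 5 → ℝ) l > ![0, 0, 10, 10, 10] l))
        = {0, 1, 2, 3} := by
      ext i
      fin_cases i <;> simp [Fin.isValue] <;> norm_num
    rw [this]; decide
  · have : (Finset.univ.filter
        (fun l => (![1, 1, 11, 11, 6] : Fin 5 → ℝ) l > ![0, 0, 10, 10, 10] l))
        = {0, 1, 2, 3} := by
      ext i
      fin_cases i <;> simp [Fin.isValue] <;> norm_num
    rw [this]; decide
  · have ha : median ![0, 0, 10, 10, 10] = 10 := by
      rw [med_eval _ [0, 0, 10, 10, 10]]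
      · rfl
      · norm_num [List.pairwise_cons]
      · exact List.Perm.refl _
    have hb : median ![1, 1, 11, 11, 6] = 6 := by
      rw [med_eval _ [1, 1, 6, 11, 11]]
      · rfl
      · norm_num [List.pairwise_cons]
      · exact List.Perm.cons _ (List.Perm.cons _
          (((List.Perm.swap _ _ _).cons _).trans (List.Perm.swap _ _ _)))
    rw [ha, hb]; norm_num
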